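/- Suppose f is C² on a neighbourhood of x(t₀), x is twice differentiable at t₀ ∈ (0,1), the natural pathway equation f(x(t)) = (1−t) • f(x(0)) holds for all t ∈ [0,1], and J := f′(x(t₀)) is a continuous linear isomorphism from E onto F. Then the second derivative of the pathway satisfies x″(t₀) = −J⁻¹( f″(x(t₀))[x′(t₀), x′(t₀)] ). -/

import Mathlib

open Topology

/-- Second-order pathway derivative (geodesic acceleration):
`x″(t₀) = -J⁻¹ (f″(x t₀)[x′ t₀, x′ t₀])` along the natural pathway. -/
theorem natural_pathway_second_deriv
    {E F : Type*} [NormedAddCommGroup E] [NormedSpace ℝ E] [CompleteSpace E]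
    [NormedAddCommGroup F] [NormedSpace ℝ F] [CompleteSpace F]
    (f : E → F) (x : ℝ → E) (t₀ : ℝ) (ht₀ : t₀ ∈ Set.Ioo (0 : ℝ) 1)
    (hf : ContDiffAt ℝ 2 f (x t₀))
    (hx1 : ∀ᶠ s in 𝓝 t₀, DifferentiableAt ℝ x s)
    (hx2 : DifferentiableAt ℝ (deriv x) t₀)
    (hpath : ∀ t ∈ Set.Icc (0 : ℝ) 1, f (x t) = (1 - t) • f (x 0))
    (J : E ≃L[ℝ] F) (hJ : (J : E →L[ℝ] F) = fderiv ℝ f (x t₀)) :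
    iteratedDeriv 2 x t₀ =
      -J.symm (iteratedFDeriv ℝ 2 f (x t₀) ![deriv x t₀, deriv x t₀]) := by
  obtain ⟨ht0, ht1⟩ := ht₀
  set c := f (x 0) with hc
  have hxd : DifferentiableAt ℝ x t₀ := hx1.self_of_nhds
  have hxc : ContinuousAt x t₀ := hxd.continuousAt
  have hfe : ∀ᶠ t in 𝓝 t₀, ContDiffAt ℝ 2 f (x t) :=
    hxc.eventually (hf.eventually (by norm_num))
  have hio : Set.Ioo (0:ℝ) 1 ∈ 𝓝 t₀ := Ioo_mem_nhds ht0 ht1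
  have hev : ∀ᶠ t in 𝓝 t₀, f (x t) = (1 - t) • c :=
    Filter.eventually_of_mem hio fun t ht => hpath t (Set.Ioo_subset_Icc_self ht)
  have hψ : ∀ᶠ t in 𝓝 t₀, (fderiv ℝ f (x t)) (deriv x t) = -c := by
    filter_upwards [hev.eventually_nhds, hfe, hx1.eventually_nhds] with t hgt hft hxt
    have hxd' : DifferentiableAt ℝ x t := hxt.self_of_nhds
    have hF : HasFDerivAt f (fderiv ℝ f (x t)) (x t) :=
      (hft.differentiableAt (by norm_num)).hasFDerivAt
    have hg : HasDerivAt (fun s => f (x s)) ((fderiv ℝ f (x t)) (deriv x t)) t :=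
      hF.comp_hasDerivAt t hxd'.hasDerivAt
    have hlin : HasDerivAt (fun s : ℝ => (1 - s) • c) (-c) t := by
      have := ((hasDerivAt_id t).const_sub 1).smul_const c
      simpa using this
    have hg' : HasDerivAt (fun s => f (x s)) (-c) t :=
      hlin.congr_of_eventuallyEq hgt
    exact hg.unique hg'
  have h2 : DifferentiableAt ℝ (fderiv ℝ f) (x t₀) :=
    (hf.fderiv_right (m := 1) (by norm_num)).differentiableAt (by norm_num)
  have hφ : HasDerivAt (fun t => fderiv ℝ f (x t))
      ((fderiv ℝ (fderiv ℝ f) (x t₀)) (deriv x t₀)) t₀ :=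
    h2.hasFDerivAt.comp_hasDerivAt t₀ hxd.hasDerivAt
  have hψD : HasDerivAt (fun t => (fderiv ℝ f (x t)) (deriv x t))
      ((fderiv ℝ (fderiv ℝ f) (x t₀)) (deriv x t₀) (deriv x t₀)
        + (fderiv ℝ f (x t₀)) (deriv (deriv x) t₀)) t₀ :=
    hφ.clm_apply hx2.hasDerivAt
  have hψ0 : HasDerivAt (fun t => (fderiv ℝ f (x t)) (deriv x t)) 0 t₀ :=
    (hasDerivAt_const t₀ (-c)).congr_of_eventuallyEq hψ
  have key := hψD.unique hψ0
  have hJ2 : (J : E →L[ℝ] F) (deriv (deriv x) t₀)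
      = -((fderiv ℝ (fderiv ℝ f) (x t₀)) (deriv x t₀) (deriv x t₀)) := by
    rw [hJ]; exact (neg_eq_of_add_eq_zero_right key).symm
  have hd2 : deriv (deriv x) t₀
      = -J.symm ((fderiv ℝ (fderiv ℝ f) (x t₀)) (deriv x t₀) (deriv x t₀)) := by
    have := congrArg J.symm hJ2
    simpa using this
  rw [show iteratedDeriv 2 x t₀ = deriv (deriv x) t₀ by
    simp [iteratedDeriv_succ, iteratedDeriv_one]]
  rw [iteratedFDeriv_two_apply]
  simpa using hd2
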